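/- Let $X^1,\dots,X^N$ solve the deterministic continuous consensus ODE with $\lambda > 0$ and weights summing to one. Then there exists a point $X_\infty \in \mathbb{R}^d$, independent of $i$, such that $\lim_{t \to \infty} X^i_t = X_\infty$ for every $i = 1,\dots,N$. -/

import Mathlib

open Real Filter

theorem stmt_2 (N d : ℕ) (hN : 0 < N) (lam : ℝ) (hlam : 0 < lam)
    (psi : ℝ → Fin N → ℝ)
    (hpsi_nonneg : ∀ t ≥ (0 : ℝ), ∀ k, 0 ≤ psi t k)
    (hpsi_sum : ∀ t ≥ (0 : ℝ), ∑ k, psi t k = 1)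
    (X : Fin N → ℝ → EuclideanSpace ℝ (Fin d))
    (hODE : ∀ i, ∀ t ≥ (0 : ℝ),
      HasDerivAt (X i) (lam • ∑ k, psi t k • (X k t - X i t)) t) :
    ∃ Xinf : EuclideanSpace ℝ (Fin d),
      ∀ i, Tendsto (X i) atTop (nhds Xinf) := by
  -- Step A: derivative of pairwise differences
  have hD : ∀ i k : Fin N, ∀ t ≥ (0 : ℝ),
      HasDerivAt (fun u => X k u - X i u) (-(lam • (X k t - X i t))) t := by
    intro i k t ht
    have h := (hODE k t ht).sub (hODE i t ht)
    refine h.congr_deriv ?_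
    have hsum := hpsi_sum t ht
    rw [← smul_sub, ← Finset.sum_sub_distrib]
    have hm : ∀ m ∈ Finset.univ, psi t m • (X m t - X k t) - psi t m • (X m t - X i t)
        = psi t m • (X i t - X k t) := by
      intro m _
      rw [← smul_sub]; congr 1; abel
    rw [Finset.sum_congr rfl hm, ← Finset.sum_smul, hsum, one_smul]
    module
  -- Step B: explicit exponential decay of differences
  have hkey : ∀ i k : Fin N, ∀ t ≥ (0 : ℝ),
      X k t - X i t = Real.exp (-(lam * t)) • (X k 0 - X i 0) := by
    intro i k t ht
    set g : ℝ → EuclideanSpace ℝ (Fin d) :=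
      fun u => Real.exp (lam * u) • (X k u - X i u) with hg_def
    have hg : ∀ u ∈ Set.Ici (0 : ℝ),
        HasDerivWithinAt g ((fun _ => (0 : EuclideanSpace ℝ (Fin d))) u) (Set.Ici 0) u := by
      intro u hu
      have h1 : HasDerivAt (fun u : ℝ => Real.exp (lam * u)) (lam * Real.exp (lam * u)) u := by
        have := (((hasDerivAt_id u).const_mul lam)).exp
        simpa [mul_comm] using this
      have h2 := h1.smul (hD i k u hu)
      have h2' : HasDerivAt g 0 u := by
        refine h2.congr_deriv ?_
        module
      exact h2'.hasDerivWithinAt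
    have hconst := (convex_Ici (0:ℝ)).norm_image_sub_le_of_norm_hasDerivWithin_le (C := 0)
      hg (fun u _ => by simp) (Set.mem_Ici.mpr le_rfl) ht
    have hgt : g t = g 0 := by
      have h0 : ‖g t - g 0‖ ≤ 0 := by simpa using hconst
      have := norm_le_zero_iff.mp h0
      exact sub_eq_zero.mp this
    have hg0 : g 0 = X k 0 - X i 0 := by simp [hg_def]
    calc X k t - X i t
        = Real.exp (-(lam * t)) • (Real.exp (lam * t) • (X k t - X i t)) := by
          rw [smul_smul, ← Real.exp_add]; simp
      _ = Real.exp (-(lam * t)) • g t := rfl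
      _ = Real.exp (-(lam * t)) • (X k 0 - X i 0) := by rw [hgt, hg0]
  -- The constant controlling the diameter seen from i
  set C : Fin N → ℝ := fun i => ∑ k, ‖X k 0 - X i 0‖ with hC_def
  have hC_nonneg : ∀ i, 0 ≤ C i := fun i =>
    Finset.sum_nonneg fun k _ => norm_nonneg _
  -- Step C: bound on the derivative of X i
  have hbound : ∀ i : Fin N, ∀ t ≥ (0 : ℝ),
      ‖lam • ∑ k, psi t k • (X k t - X i t)‖ ≤ C i * (lam * Real.exp (-(lam * t))) := by
    intro i t ht
    rw [norm_smul, Real.norm_eq_abs, abs_of_pos hlam]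
    have hle : ‖∑ k, psi t k • (X k t - X i t)‖ ≤ C i * Real.exp (-(lam * t)) := by
      calc ‖∑ k, psi t k • (X k t - X i t)‖
          ≤ ∑ k, ‖psi t k • (X k t - X i t)‖ := norm_sum_le _ _
        _ = ∑ k, psi t k * (Real.exp (-(lam * t)) * ‖X k 0 - X i 0‖) := by
            refine Finset.sum_congr rfl fun k _ => ?_
            rw [norm_smul, Real.norm_eq_abs, abs_of_nonneg (hpsi_nonneg t ht k),
              hkey i k t ht, norm_smul, Real.norm_eq_abs,
              abs_of_pos (Real.exp_pos _)]
        _ ≤ ∑ k, 1 * (Real.exp (-(lam * t)) * ‖X k 0 - X i 0‖) := by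
            refine Finset.sum_le_sum fun k _ => ?_
            have hk1 : psi t k ≤ 1 := by
              have := Finset.single_le_sum (f := psi t)
                (fun m _ => hpsi_nonneg t ht m) (Finset.mem_univ k)
              rw [hpsi_sum t ht] at this
              exact this
            have hnn : 0 ≤ Real.exp (-(lam * t)) * ‖X k 0 - X i 0‖ :=
              mul_nonneg (Real.exp_pos _).le (norm_nonneg _)
            exact mul_le_mul_of_nonneg_right hk1 hnn
        _ = C i * Real.exp (-(lam * t)) := by
            simp only [one_mul, ← Finset.mul_sum, hC_def]
            ring
    calc lam * ‖∑ k, psi t k • (X k t - X i t)‖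
        ≤ lam * (C i * Real.exp (-(lam * t))) :=
          mul_le_mul_of_nonneg_left hle hlam.le
      _ = C i * (lam * Real.exp (-(lam * t))) := by ring
  -- Step D: Cauchy-type estimate
  have hest : ∀ i : Fin N, ∀ t ≥ (0 : ℝ), ∀ s, t ≤ s →
      ‖X i s - X i t‖ ≤ C i * Real.exp (-(lam * t)) := by
    intro i t ht s hts
    have main : ∀ x ∈ Set.Icc t s,
        ‖X i x - X i t‖ ≤ C i * (Real.exp (-(lam * t)) - Real.exp (-(lam * x))) := by
      apply image_norm_le_of_norm_deriv_right_le_deriv_boundary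
        (f := fun u => X i u - X i t)
        (f' := fun u => lam • ∑ k, psi u k • (X k u - X i u))
        (B := fun u => C i * (Real.exp (-(lam * t)) - Real.exp (-(lam * u))))
        (B' := fun u => C i * (lam * Real.exp (-(lam * u))))
      · intro u hu
        exact ((hODE i u (ht.trans hu.1)).sub_const _).continuousAt.continuousWithinAt
      · intro u hu
        exact ((hODE i u (ht.trans hu.1)).sub_const _).hasDerivWithinAt
      · simp
      · intro x
        have h1 : HasDerivAt (fun u : ℝ => -(lam * u)) (-lam) x := by
          simpa using ((hasDerivAt_id x).const_mul (-lam))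
        have h2 := h1.exp
        have h3 := (h2.const_sub (Real.exp (-(lam * t)))).const_mul (C i)
        refine h3.congr_deriv ?_
        ring
      · intro x hx
        exact hbound i x (ht.trans hx.1)
    have := main s ⟨hts, le_refl s⟩
    have h4 : C i * (Real.exp (-(lam * t)) - Real.exp (-(lam * s)))
        ≤ C i * Real.exp (-(lam * t)) := by
      have := (Real.exp_pos (-(lam * s))).le
      nlinarith [hC_nonneg i]
    linarith
  -- Step E: each X i converges
  have hL : ∀ i : Fin N, ∃ L, Tendsto (X i) atTop (nhds L) := by
    intro i
    have hcauchy : Cauchy (map (X i) atTop) := by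
      rw [Metric.cauchy_iff]
      refine ⟨map_neBot, fun ε hε => ?_⟩
      obtain ⟨T, hT0, hT⟩ : ∃ T ≥ (0:ℝ), C i * Real.exp (-(lam * T)) < ε / 2 := by
        have htend : Tendsto (fun T : ℝ => C i * Real.exp (-(lam * T))) atTop (nhds 0) := by
          have h1 : Tendsto (fun T : ℝ => -(lam * T)) atTop atBot := by
            exact tendsto_neg_atTop_atBot.comp (Tendsto.const_mul_atTop hlam tendsto_id)
          have h2 := Real.tendsto_exp_atBot.comp h1
          simpa using h2.const_mul (C i)
        have hev := htend.eventually (gt_mem_nhds (by linarith : (0:ℝ) < ε / 2))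
        exact ((eventually_ge_atTop (0:ℝ)).and hev).exists.imp fun T h => ⟨h.1, h.2⟩
      refine ⟨X i '' Set.Ici T, image_mem_map (Ici_mem_atTop T), ?_⟩
      rintro x ⟨a, ha, rfl⟩ y ⟨b, hb, rfl⟩
      have h1 := hest i T hT0 a ha
      have h2 := hest i T hT0 b hb
      calc dist (X i a) (X i b)
          ≤ dist (X i a) (X i T) + dist (X i T) (X i b) := dist_triangle _ _ _
        _ = ‖X i a - X i T‖ + ‖X i b - X i T‖ := by
            rw [dist_eq_norm, dist_eq_norm, norm_sub_rev (X i T)]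
        _ < ε := by linarith
    obtain ⟨L, hLle⟩ := CompleteSpace.complete hcauchy
    exact ⟨L, hLle⟩
  choose L hLt using hL
  have i0 : Fin N := ⟨0, hN⟩
  refine ⟨L i0, fun i => ?_⟩
  have h1 : Tendsto (fun t => X i t - X i0 t) atTop (nhds (L i - L i0)) :=
    (hLt i).sub (hLt i0)
  have h2 : Tendsto (fun t => X i t - X i0 t) atTop (nhds 0) := by
    have he : Tendsto (fun t : ℝ => Real.exp (-(lam * t))) atTop (nhds 0) := by
      have h1' : Tendsto (fun T : ℝ => -(lam * T)) atTop atBot := by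
        exact tendsto_neg_atTop_atBot.comp (Tendsto.const_mul_atTop hlam tendsto_id)
      exact Real.tendsto_exp_atBot.comp h1'
    have hsm := he.smul_const (X i 0 - X i0 0)
    rw [zero_smul] at hsm
    refine Tendsto.congr' ?_ hsm
    filter_upwards [eventually_ge_atTop (0:ℝ)] with t ht
    exact (hkey i0 i t ht).symm
  have heq : L i - L i0 = 0 := tendsto_nhds_unique h1 h2
  have : L i = L i0 := sub_eq_zero.mp heq
  rw [← this]
  exact hLt i
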